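/- Consider the unconstrained two-environment linear regression game U-LRG on ℝⁿ. If the least squares optimal solutions of the two environments coincide, i.e. w₁* = w₂* =: w*, then a pair (w₁†, w₂†) ∈ ℝⁿ × ℝⁿ is a pure Nash equilibrium of U-LRG if and only if w₁† + w₂† = w*. -/

import Mathlib

open Matrix

/-- Risk of an environment with second-moment matrix `S` and cross-moment vector `ρ`
at the joint action `(w₁, w₂)`:  `(w₁+w₂)ᵀ S (w₁+w₂) − 2 ρᵀ (w₁+w₂)`. -/
noncomputable def risk {n : ℕ} (S : Matrix (Fin n) (Fin n) ℝ) (ρ : Fin n → ℝ)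
    (w₁ w₂ : Fin n → ℝ) : ℝ :=
  (w₁ + w₂) ⬝ᵥ (S *ᵥ (w₁ + w₂)) - 2 * (ρ ⬝ᵥ (w₁ + w₂))

lemma swap_dot {n : ℕ} {S : Matrix (Fin n) (Fin n) ℝ} (hsymm : Sᵀ = S)
    (a b : Fin n → ℝ) : a ⬝ᵥ (S *ᵥ b) = b ⬝ᵥ (S *ᵥ a) := by
  rw [dotProduct_mulVec, ← mulVec_transpose, hsymm, dotProduct_comm]

lemma quad_expand {n : ℕ} {S : Matrix (Fin n) (Fin n) ℝ} (hsymm : Sᵀ = S)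
    (w s : Fin n → ℝ) :
    (s ⬝ᵥ (S *ᵥ s) - 2 * ((S *ᵥ w) ⬝ᵥ s)) -
      (w ⬝ᵥ (S *ᵥ w) - 2 * ((S *ᵥ w) ⬝ᵥ w)) = (s - w) ⬝ᵥ (S *ᵥ (s - w)) := by
  have h1 : w ⬝ᵥ (S *ᵥ s) = s ⬝ᵥ (S *ᵥ w) := swap_dot hsymm w s
  have h2 : (S *ᵥ w) ⬝ᵥ s = s ⬝ᵥ (S *ᵥ w) := dotProduct_comm _ _
  have h3 : (S *ᵥ w) ⬝ᵥ w = w ⬝ᵥ (S *ᵥ w) := dotProduct_comm _ _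
  simp only [mulVec_sub, dotProduct_sub, sub_dotProduct, h1, h2, h3]
  ring

theorem ulrg_nash_iff_sum_eq_of_ls_eq {n : ℕ}
    (S₁ S₂ : Matrix (Fin n) (Fin n) ℝ) (hS₁ : S₁.PosDef) (hS₂ : S₂.PosDef)
    (ρ₁ ρ₂ : Fin n → ℝ) (wstar : Fin n → ℝ)
    (h₁ : S₁⁻¹ *ᵥ ρ₁ = wstar) (h₂ : S₂⁻¹ *ᵥ ρ₂ = wstar)
    (w₁ w₂ : Fin n → ℝ) :
    ((∀ u : Fin n → ℝ, risk S₁ ρ₁ w₁ w₂ ≤ risk S₁ ρ₁ u w₂) ∧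
     (∀ v : Fin n → ℝ, risk S₂ ρ₂ w₁ w₂ ≤ risk S₂ ρ₂ w₁ v)) ↔
    w₁ + w₂ = wstar := by
  have hinv₁ : IsUnit S₁.det := isUnit_iff_ne_zero.mpr (ne_of_gt hS₁.det_pos)
  have hinv₂ : IsUnit S₂.det := isUnit_iff_ne_zero.mpr (ne_of_gt hS₂.det_pos)
  have hρ₁ : ρ₁ = S₁ *ᵥ wstar := by
    rw [← h₁, mulVec_mulVec, Matrix.mul_nonsing_inv _ hinv₁, one_mulVec]
  have hρ₂ : ρ₂ = S₂ *ᵥ wstar := by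
    rw [← h₂, mulVec_mulVec, Matrix.mul_nonsing_inv _ hinv₂, one_mulVec]
  have hsymm₁ : S₁ᵀ = S₁ := hS₁.isHermitian.eq
  have hsymm₂ : S₂ᵀ = S₂ := hS₂.isHermitian.eq
  -- risk difference formula
  have key : ∀ (S : Matrix (Fin n) (Fin n) ℝ), Sᵀ = S → ∀ s : Fin n → ℝ,
      (s ⬝ᵥ (S *ᵥ s) - 2 * ((S *ᵥ wstar) ⬝ᵥ s)) -
        (wstar ⬝ᵥ (S *ᵥ wstar) - 2 * ((S *ᵥ wstar) ⬝ᵥ wstar)) =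
        (s - wstar) ⬝ᵥ (S *ᵥ (s - wstar)) := fun S hs s => quad_expand hs wstar s
  constructor
  · rintro ⟨hN₁, -⟩
    by_contra hne
    -- player 1 deviates to wstar - w₂
    have := hN₁ (wstar - w₂)
    simp only [risk, hρ₁] at this
    have hws : wstar - w₂ + w₂ = wstar := by abel
    rw [hws] at this
    have hd := key S₁ hsymm₁ (w₁ + w₂)
    have hpos : 0 < (w₁ + w₂ - wstar) ⬝ᵥ (S₁ *ᵥ (w₁ + w₂ - wstar)) := by
      have := hS₁.dotProduct_mulVec_pos (x := w₁ + w₂ - wstar) (sub_ne_zero.mpr hne)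
      simpa using this
    have hzero : (wstar - wstar) ⬝ᵥ (S₁ *ᵥ (wstar - wstar)) = 0 := by simp
    have hd0 := key S₁ hsymm₁ wstar
    rw [hzero] at hd0
    linarith
  · intro hsum
    constructor
    · intro u
      simp only [risk, hρ₁, hsum]
      have hd := key S₁ hsymm₁ (u + w₂)
      have hd0 := key S₁ hsymm₁ wstar
      have hzero : (wstar - wstar) ⬝ᵥ (S₁ *ᵥ (wstar - wstar)) = 0 := by simp
      rw [hzero] at hd0
      have hnn : 0 ≤ (u + w₂ - wstar) ⬝ᵥ (S₁ *ᵥ (u + w₂ - wstar)) := by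
        rcases eq_or_ne (u + w₂ - wstar) 0 with h | h
        · simp [h]
        · have := hS₁.dotProduct_mulVec_pos h; simpa using this.le
      linarith
    · intro v
      simp only [risk, hρ₂, hsum]
      have hd := key S₂ hsymm₂ (w₁ + v)
      have hd0 := key S₂ hsymm₂ wstar
      have hzero : (wstar - wstar) ⬝ᵥ (S₂ *ᵥ (wstar - wstar)) = 0 := by simp
      rw [hzero] at hd0
      have hnn : 0 ≤ (w₁ + v - wstar) ⬝ᵥ (S₂ *ᵥ (w₁ + v - wstar)) := by
        rcases eq_or_ne (w₁ + v - wstar) 0 with h | h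
        · simp [h]
        · have := hS₂.dotProduct_mulVec_pos h; simpa using this.le
      linarith
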